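/- Let γ ∈ (0,1) and ε ∈ (0,1). There exist constants 0 < c ≤ C and k_0 ∈ ℕ such that for all k ≥ k_0: c · (1−ε^γ)^k / k ≤ ∫_ε^1 (1 − y^γ)^k dy ≤ C · (1−ε^γ)^k / k. -/

import Mathlib

/-- Integral of a power of a linear function. -/
lemma integral_linear_pow (d m p q : ℝ) (hm : m ≠ 0) (k : ℕ) :
    ∫ y in p..q, (d - m * y) ^ k
      = ((d - m * p) ^ (k + 1) - (d - m * q) ^ (k + 1)) / (m * (k + 1)) := by
  have hk : ((k : ℝ) + 1) ≠ 0 := by positivity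
  have hd : ∀ y : ℝ, HasDerivAt (fun y : ℝ => -(d - m * y) ^ (k + 1) / (m * (k + 1)))
      ((d - m * y) ^ k) y := by
    intro y
    have h1 : HasDerivAt (fun y : ℝ => d - m * y) (-m) y := by
      simpa using ((hasDerivAt_id y).const_mul m).const_sub d
    have h2 := ((h1.pow (k + 1)).neg).div_const (m * (k + 1))
    refine h2.congr_deriv ?_
    simp only [Nat.add_sub_cancel, Nat.cast_add, Nat.cast_one]
    field_simp
  rw [intervalIntegral.integral_eq_sub_of_hasDerivAt (fun y _ => hd y)
      (((continuous_const.sub (continuous_const.mul continuous_id)).pow k).intervalIntegrable p q)]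
  ring

set_option maxHeartbeats 1000000 in
/-- Laplace-method asymptotics: for `γ, ε ∈ (0,1)` there are constants
`0 < c ≤ C` and `k₀` with `c (1−ε^γ)^k / k ≤ ∫_ε^1 (1−y^γ)^k dy ≤ C (1−ε^γ)^k / k`
for all `k ≥ k₀`. -/
theorem integral_one_sub_rpow_pow_asymp (γ ε : ℝ) (hγ : γ ∈ Set.Ioo (0 : ℝ) 1)
    (hε : ε ∈ Set.Ioo (0 : ℝ) 1) :
    ∃ c C : ℝ, 0 < c ∧ c ≤ C ∧ ∃ k₀ : ℕ, ∀ k : ℕ, k₀ ≤ k →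
      c * (1 - ε ^ γ) ^ k / k ≤ (∫ y in ε..1, (1 - y ^ γ) ^ k) ∧
      (∫ y in ε..1, (1 - y ^ γ) ^ k) ≤ C * (1 - ε ^ γ) ^ k / k := by
  obtain ⟨hγ0, hγ1⟩ := hγ
  obtain ⟨hε0, hε1⟩ := hε
  have hεγ : ε ^ γ < 1 := Real.rpow_lt_one hε0.le hε1 hγ0
  have hεγ0 : 0 < ε ^ γ := Real.rpow_pos_of_pos hε0 γ
  set a : ℝ := 1 - ε ^ γ with ha_def
  have ha : 0 < a := by simp only [ha_def]; linarith
  set M : ℝ := γ * ε ^ (γ - 1) with hM_def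
  have hM : 0 < M := mul_pos hγ0 (Real.rpow_pos_of_pos hε0 _)
  set L : ℝ := a / (1 - ε) with hL_def
  have hε1' : (0 : ℝ) < 1 - ε := by linarith
  have hL : 0 < L := div_pos ha hε1'
  -- continuity of the integrand
  have hcont : ∀ k : ℕ, Continuous fun y : ℝ => (1 - y ^ γ) ^ k := fun k =>
    (continuous_const.sub (Real.continuous_rpow_const hγ0.le)).pow k
  -- chord inequality: for y ∈ [ε,1], 1 - y^γ ≤ L * (1 - y)
  have chord : ∀ y ∈ Set.Icc ε 1, 1 - y ^ γ ≤ L * (1 - y) := by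
    intro y hy
    obtain ⟨hy1, hy2⟩ := hy
    have hlam : (0 : ℝ) ≤ (1 - y) / (1 - ε) := div_nonneg (by linarith) hε1'.le
    have hmu : (0 : ℝ) ≤ (y - ε) / (1 - ε) := div_nonneg (by linarith) hε1'.le
    have hsum : (1 - y) / (1 - ε) + (y - ε) / (1 - ε) = 1 := by
      field_simp
      ring
    have hc := (Real.concaveOn_rpow hγ0.le hγ1.le).2 (Set.mem_Ici.2 hε0.le)
      (Set.mem_Ici.2 (zero_le_one)) hlam hmu hsum
    simp only [smul_eq_mul, Real.one_rpow, mul_one] at hc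
    have hy' : (1 - y) / (1 - ε) * ε + (y - ε) / (1 - ε) = y := by
      field_simp; ring
    rw [hy'] at hc
    have key : L * (1 - y) = 1 - ((1 - y) / (1 - ε) * ε ^ γ + (y - ε) / (1 - ε)) := by
      rw [hL_def, ha_def]; field_simp; ring
    linarith [hc, key]
  -- tangent inequality: for y ∈ [ε,1], a - M*(y-ε) ≤ 1 - y^γ
  have tangent : ∀ y ∈ Set.Icc ε 1, a + M * ε - M * y ≤ 1 - y ^ γ := by
    intro y hy
    obtain ⟨hy1, hy2⟩ := hy
    have hy0 : 0 < y := lt_of_lt_of_le hε0 hy1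
    have ht : (0 : ℝ) ≤ (y - ε) / ε := by apply div_nonneg _ hε0.le; linarith
    have hyeq : y = ε * (1 + (y - ε) / ε) := by field_simp; ring
    have hb : (1 + (y - ε) / ε) ^ γ ≤ 1 + γ * ((y - ε) / ε) :=
      rpow_one_add_le_one_add_mul_self (by linarith) hγ0.le hγ1.le
    have hmul : y ^ γ = ε ^ γ * (1 + (y - ε) / ε) ^ γ := by
      rw [hyeq, Real.mul_rpow hε0.le (by linarith)]
      rw [← hyeq]
    have hεpow : ε ^ γ / ε = ε ^ (γ - 1) := by
      rw [Real.rpow_sub hε0, Real.rpow_one]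
    have : y ^ γ ≤ ε ^ γ + γ * (ε ^ γ / ε) * (y - ε) := by
      rw [hmul]
      have := mul_le_mul_of_nonneg_left hb hεγ0.le
      calc ε ^ γ * (1 + (y - ε) / ε) ^ γ ≤ ε ^ γ * (1 + γ * ((y - ε) / ε)) := this
        _ = ε ^ γ + γ * (ε ^ γ / ε) * (y - ε) := by field_simp
    rw [hεpow] at this
    rw [ha_def, hM_def]
    linarith
  -- setup for the lower bound
  set s : ℝ := min 1 (ε + a / M) with hs_def
  have hεs : ε < s := lt_min hε1 (by have := div_pos ha hM; linarith)
  have hs1 : s ≤ 1 := min_le_left _ _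
  have hsM : M * (s - ε) ≤ a := by
    have : s ≤ ε + a / M := min_le_right _ _
    rw [mul_comm, ← le_div_iff₀ hM]
    linarith
  set b : ℝ := a + M * ε - M * s with hb_def
  have hb0 : 0 ≤ b := by rw [hb_def]; nlinarith
  have hba : b < a := by rw [hb_def]; nlinarith
  set r : ℝ := b / a with hr_def
  have hr0 : 0 ≤ r := div_nonneg hb0 ha.le
  have hr1 : r < 1 := (div_lt_one ha).2 hba
  obtain ⟨N, hN⟩ := exists_pow_lt_of_lt_one (by norm_num : (0 : ℝ) < 1 / 2) hr1
  refine ⟨min (a / (4 * M)) (1 - ε), 1 - ε, lt_min (by positivity) hε1', min_le_right _ _,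
    max N 1, fun k hk => ?_⟩
  have hk1 : 1 ≤ k := le_trans (le_max_right N 1) hk
  have hkN : N ≤ k := le_trans (le_max_left N 1) hk
  have hkpos : (0 : ℝ) < k := by exact_mod_cast hk1
  have hk1' : (1 : ℝ) ≤ k := by exact_mod_cast hk1
  constructor
  · -- lower bound
    -- split the integral at s
    have hint1 : IntervalIntegrable (fun y => (1 - y ^ γ) ^ k) MeasureTheory.volume ε s :=
      (hcont k).intervalIntegrable ε s
    have hint2 : IntervalIntegrable (fun y => (1 - y ^ γ) ^ k) MeasureTheory.volume s 1 :=
      (hcont k).intervalIntegrable s 1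
    have hsplit : (∫ y in ε..1, (1 - y ^ γ) ^ k)
        = (∫ y in ε..s, (1 - y ^ γ) ^ k) + ∫ y in s..1, (1 - y ^ γ) ^ k :=
      (intervalIntegral.integral_add_adjacent_intervals hint1 hint2).symm
    have htail : 0 ≤ ∫ y in s..1, (1 - y ^ γ) ^ k := by
      apply intervalIntegral.integral_nonneg hs1
      intro y hy
      have hy1 : y ≤ 1 := hy.2
      have hy0 : 0 ≤ y := le_trans (le_trans hε0.le hεs.le) hy.1
      have : y ^ γ ≤ 1 := Real.rpow_le_one hy0 hy1 hγ0.le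
      exact pow_nonneg (by linarith) k
    -- compare on [ε, s]
    have hmono : (∫ y in ε..s, (a + M * ε - M * y) ^ k) ≤ ∫ y in ε..s, (1 - y ^ γ) ^ k := by
      apply intervalIntegral.integral_mono_on hεs.le
        (((continuous_const.sub (continuous_const.mul continuous_id)).pow k).intervalIntegrable ε s)
        hint1
      intro y hy
      have hy1 : ε ≤ y := hy.1
      have hy2 : y ≤ s := hy.2
      have hnn : 0 ≤ a + M * ε - M * y := by nlinarith
      exact pow_le_pow_left₀ hnn (tangent y ⟨hy1, le_trans hy2 hs1⟩) k
    have hcomp : (∫ y in ε..s, (a + M * ε - M * y) ^ k)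
        = (a ^ (k + 1) - b ^ (k + 1)) / (M * (k + 1)) := by
      have e1 : a + M * ε - M * ε = a := by ring
      rw [integral_linear_pow (a + M * ε) M ε s hM.ne' k, e1, ← hb_def]
    -- bound b^(k+1)
    have hbpow : b ^ (k + 1) ≤ a ^ (k + 1) / 2 := by
      have hbr : b = r * a := by rw [hr_def]; field_simp
      have h1 : r ^ (k + 1) ≤ r ^ N := pow_le_pow_of_le_one hr0 hr1.le (by omega)
      have h2 : r ^ (k + 1) ≤ 1 / 2 := le_trans h1 hN.le
      have hap : 0 < a ^ (k + 1) := pow_pos ha _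
      calc b ^ (k + 1) = r ^ (k + 1) * a ^ (k + 1) := by rw [hbr, mul_pow]
        _ ≤ (1 / 2) * a ^ (k + 1) := by nlinarith
        _ = a ^ (k + 1) / 2 := by ring
    -- final arithmetic
    have hfinal : min (a / (4 * M)) (1 - ε) * a ^ k / k
        ≤ (a ^ (k + 1) - b ^ (k + 1)) / (M * (k + 1)) := by
      have hap : (0 : ℝ) < a ^ k := pow_pos ha _
      have h1 : min (a / (4 * M)) (1 - ε) * a ^ k / k ≤ a / (4 * M) * a ^ k / k := by
        gcongr
        exact min_le_left _ _
      have h2 : a / (4 * M) * a ^ k / k ≤ a ^ (k + 1) / (2 * (M * (k + 1))) := by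
        rw [div_le_div_iff₀ (by positivity) (by positivity), pow_succ]
        have : (k : ℝ) + 1 ≤ 2 * k := by linarith
        calc a / (4 * M) * a ^ k * (2 * (M * (k + 1)))
            = a ^ k * a * ((k : ℝ) + 1) / 2 := by field_simp; ring
          _ ≤ a ^ k * a * (2 * k) / 2 := by gcongr
          _ = a ^ k * a * k := by ring
      have h3 : a ^ (k + 1) / (2 * (M * (k + 1))) ≤ (a ^ (k + 1) - b ^ (k + 1)) / (M * (k + 1)) := by
        rw [div_le_div_iff₀ (by positivity) (by positivity)]
        have hMk : (0 : ℝ) < M * ((k : ℝ) + 1) := by positivity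
        nlinarith [mul_le_mul_of_nonneg_right hbpow hMk.le]
      linarith
    calc min (a / (4 * M)) (1 - ε) * a ^ k / k
        ≤ (a ^ (k + 1) - b ^ (k + 1)) / (M * (k + 1)) := hfinal
      _ = ∫ y in ε..s, (a + M * ε - M * y) ^ k := hcomp.symm
      _ ≤ ∫ y in ε..s, (1 - y ^ γ) ^ k := hmono
      _ ≤ ∫ y in ε..1, (1 - y ^ γ) ^ k := by rw [hsplit]; linarith
  · -- upper bound
    have hmono : (∫ y in ε..1, (1 - y ^ γ) ^ k) ≤ ∫ y in ε..1, (L - L * y) ^ k := by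
      apply intervalIntegral.integral_mono_on hε1.le ((hcont k).intervalIntegrable ε 1)
        (((continuous_const.sub (continuous_const.mul continuous_id)).pow k).intervalIntegrable ε 1)
      intro y hy
      have hy0 : 0 ≤ y := le_trans hε0.le hy.1
      have hnn : 0 ≤ 1 - y ^ γ := by
        have : y ^ γ ≤ 1 := Real.rpow_le_one hy0 hy.2 hγ0.le
        linarith
      have := chord y hy
      have heq : L * (1 - y) = L - L * y := by ring
      exact pow_le_pow_left₀ hnn (le_of_le_of_eq this heq) k
    have hcomp : (∫ y in ε..1, (L - L * y) ^ k) = a ^ (k + 1) / (L * (k + 1)) := by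
      rw [integral_linear_pow L L ε 1 hL.ne' k]
      have h1 : L - L * ε = a := by rw [hL_def]; field_simp
      have h2 : L - L * 1 = 0 := by ring
      rw [h1, h2, zero_pow (by omega), sub_zero]
    have hfinal : a ^ (k + 1) / (L * (k + 1)) ≤ (1 - ε) * a ^ k / k := by
      rw [div_le_div_iff₀ (by positivity) hkpos, pow_succ]
      have hLa : a / L = 1 - ε := by rw [hL_def]; field_simp
      have hap : (0 : ℝ) < a ^ k := pow_pos ha _
      have : (k : ℝ) ≤ (k : ℝ) + 1 := by linarith
      calc a ^ k * a * k ≤ a ^ k * a * ((k : ℝ) + 1) := by gcongr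
        _ = (1 - ε) * a ^ k * (L * ((k : ℝ) + 1)) := by
            rw [← hLa]; field_simp
    calc (∫ y in ε..1, (1 - y ^ γ) ^ k) ≤ ∫ y in ε..1, (L - L * y) ^ k := hmono
      _ = a ^ (k + 1) / (L * (k + 1)) := hcomp
      _ ≤ (1 - ε) * a ^ k / k := hfinal
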